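/- arXiv:0809.3122 — 2 statements merged into one kernel-verified Lean document; each statement's English description precedes it below -/
import Mathlib

section
/- Let κ ∈ ℂ not be a negative rational number. Then there exists a constant R₁ > 0 such that for every partition λ = (λ_1,…,λ_n) with at most n parts, ∏_{1≤i<j≤n} | [κ(j−i−1)+1]_{λ_i−λ_j} / [κ(j−i)+1]_{λ_i−λ_j} | ≤ R₁^{|λ|}. -/
open MeasureTheory Finset Real

noncomputable section

/-- `κ` is not a negative rational number. -/
def NotNegRat (κ : ℂ) : Prop := ∀ q : ℚ, q < 0 → κ ≠ (q : ℂ)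

/-- A partition with at most `n` parts: a weakly decreasing map `Fin n → ℕ`. -/
def IsPartition {n : ℕ} (lam : Fin n → ℕ) : Prop := ∀ i j : Fin n, i ≤ j → lam j ≤ lam i

/-- The weight `|λ|` of a partition. -/
def wt {n : ℕ} (lam : Fin n → ℕ) : ℕ := ∑ i, lam i

/-- Strict dominance order on partitions of equal weight. -/
def DomLT {n : ℕ} (μ lam : Fin n → ℕ) : Prop :=
  wt μ = wt lam ∧ μ ≠ lam ∧
    ∀ k : Fin n, ∑ i ∈ univ.filter (· ≤ k), μ i ≤ ∑ i ∈ univ.filter (· ≤ k), lam i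

/-- Monomial symmetric polynomial `m_λ`: the sum over all distinct rearrangements of `λ`. -/
def mSym {n : ℕ} (lam : Fin n → ℕ) : MvPolynomial (Fin n) ℂ :=
  ∑ d ∈ Finset.image (fun σ : Equiv.Perm (Fin n) =>
      Finsupp.equivFunOnFinite.symm (lam ∘ σ)) Finset.univ,
    MvPolynomial.monomial d (1 : ℂ)

/-- The operator `D = Σ x_i² ∂_i² + 2κ Σ_{i≠j} x_i²/(x_i-x_j) ∂_i` applied to a polynomial,
evaluated at a point `x`. -/
def jackOp {n : ℕ} (κ : ℂ) (P : MvPolynomial (Fin n) ℂ) (x : Fin n → ℂ) : ℂ :=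
  ∑ i, (x i) ^ 2 * MvPolynomial.eval x (MvPolynomial.pderiv i (MvPolynomial.pderiv i P)) +
    2 * κ * ∑ i, ∑ j ∈ univ.erase i,
      (x i) ^ 2 / (x i - x j) * MvPolynomial.eval x (MvPolynomial.pderiv i P)

/-- `P` is the Jack polynomial `P_λ(·;κ)`:  it is of the form `m_λ + Σ_{μ<λ} u_{λμ} m_μ`
and an eigenfunction of `D`. -/
def IsJack {n : ℕ} (κ : ℂ) (lam : Fin n → ℕ) (P : MvPolynomial (Fin n) ℂ) : Prop :=
  P - mSym lam ∈ Submodule.span ℂ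
      {Q | ∃ μ : Fin n → ℕ, IsPartition μ ∧ DomLT μ lam ∧ Q = mSym μ} ∧
  ∃ e : ℂ, ∀ x : Fin n → ℂ, (∀ i j : Fin n, i ≠ j → x i ≠ x j) →
    jackOp κ P x = e * MvPolynomial.eval x P

/-- The Jack polynomial `P_λ(·;κ)` (defined when it exists and is unique). -/
def jackPoly {n : ℕ} (κ : ℂ) (lam : Fin n → ℕ) : MvPolynomial (Fin n) ℂ := by
  classical exact if h : ∃! P, IsJack κ lam P then h.choose else 0

end

noncomputable section

/-- The operator `D^B` applied to a polynomial, evaluated at a point `x`. -/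
def besselOp {n : ℕ} (a κ : ℂ) (P : MvPolynomial (Fin n) ℂ) (x : Fin n → ℂ) : ℂ :=
  ∑ i, MvPolynomial.eval x (MvPolynomial.pderiv i (MvPolynomial.pderiv i P)) +
    ∑ i, (a * x i + 2) * MvPolynomial.eval x (MvPolynomial.pderiv i P) +
    2 * κ * ∑ i, ∑ j ∈ univ.erase i,
      (x i) ^ 2 / (x i - x j) * MvPolynomial.eval x (MvPolynomial.pderiv i P)

/-- Strict containment `μ ⊂ λ` of partitions. -/
def SubsetLT {n : ℕ} (μ lam : Fin n → ℕ) : Prop := (∀ i, μ i ≤ lam i) ∧ μ ≠ lam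

/-- `Y` is the multivariable Bessel polynomial `Y_λ(·;a,κ)`:  it is of the form
`P_λ + Σ_{μ⊂λ} u_{λμ} P_μ` and an eigenfunction of `D^B`. -/
def IsBessel {n : ℕ} (a κ : ℂ) (lam : Fin n → ℕ) (Y : MvPolynomial (Fin n) ℂ) : Prop :=
  Y - jackPoly κ lam ∈ Submodule.span ℂ
      {Q | ∃ μ : Fin n → ℕ, IsPartition μ ∧ SubsetLT μ lam ∧ Q = jackPoly κ μ} ∧
  ∃ e : ℂ, ∀ x : Fin n → ℂ, (∀ i j : Fin n, i ≠ j → x i ≠ x j) →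
    besselOp a κ Y x = e * MvPolynomial.eval x Y

/-- The multivariable Bessel polynomial `Y_λ(·;a,κ)` (defined when it exists and is unique). -/
def besselPoly {n : ℕ} (a κ : ℂ) (lam : Fin n → ℕ) : MvPolynomial (Fin n) ℂ := by
  classical exact if h : ∃! Y, IsBessel a κ lam Y then h.choose else 0

/-- The Pochhammer symbol `[α]_m = α(α+1)⋯(α+m-1)`. -/
def poch (α : ℂ) (m : ℕ) : ℂ := ∏ k ∈ Finset.range m, (α + k)

/-- The type of partitions with at most `n` parts. -/
def PartitionN (n : ℕ) := {lam : Fin n → ℕ // IsPartition lam}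

/-- The coefficient of `P_λ(-2x⁻¹;κ)` in the series defining the weight function `𝒲`. -/
def Wcoef {n : ℕ} (a κ : ℂ) (lam : Fin n → ℕ) : ℂ :=
  (∏ p ∈ univ.filter (fun p : Fin n × Fin n => p.1 < p.2),
      Complex.Gamma (κ * (((p.2 : ℕ) : ℂ) - ((p.1 : ℕ) : ℂ)) + ((lam p.1 : ℂ) - (lam p.2 : ℂ)) + 1) /
      Complex.Gamma (κ * (((p.2 : ℕ) : ℂ) - ((p.1 : ℕ) : ℂ) - 1) + ((lam p.1 : ℂ) - (lam p.2 : ℂ)) + 1)) *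
  ∏ i : Fin n,
      Complex.Gamma (κ * (((i : ℕ) : ℂ) + 1)) *
        Complex.Gamma (a + κ * (2 * (n : ℂ) - ((i : ℕ) : ℂ) - 2)) /
      (Complex.Gamma κ *
        Complex.Gamma (a - 1 + κ * (2 * (n : ℂ) - ((i : ℕ) : ℂ) - 2) + (lam i : ℂ)))

/-- The weight function `𝒲(x;a,κ)`. -/
def scriptW (n : ℕ) (a κ : ℂ) (x : Fin n → ℂ) : ℂ :=
  (1 / ((2 * (π : ℂ) * Complex.I) ^ n * (n.factorial : ℂ))) *
    ∑' lam : PartitionN n, Wcoef a κ lam.1 *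
      MvPolynomial.eval (fun i => -2 / x i) (jackPoly κ lam.1)

/-- The weight function `W(x;a,κ) = 𝒲(x;a,κ) ∏_{i≠j} (1 - x_i/x_j)^κ`. -/
def weightW (n : ℕ) (a κ : ℂ) (x : Fin n → ℂ) : ℂ :=
  scriptW n a κ x *
    ∏ p ∈ univ.filter (fun p : Fin n × Fin n => p.1 ≠ p.2), (1 - x p.1 / x p.2) ^ κ

/-- The `L²` weight function `W_{L²}(x;a,κ)` on `ℝ₊ⁿ`. -/
def wL2 (n : ℕ) (a κ : ℂ) (x : Fin n → ℝ) : ℂ :=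
  (1 / (n.factorial : ℂ)) * (∏ i, ((x i : ℂ) ^ (a - 2) * Complex.exp (-2 / (x i : ℂ)))) *
    ∏ p ∈ univ.filter (fun p : Fin n × Fin n => p.1 < p.2), ((|x p.1 - x p.2| : ℝ) : ℂ) ^ (2 * κ)

end

set_option maxHeartbeats 1000000 in
/-- The bound `∏_{i<j} |[κ(j-i-1)+1]_{λ_i-λ_j} / [κ(j-i)+1]_{λ_i-λ_j}| ≤ R₁^{|λ|}`. -/
theorem poch_ratio_bound (n : ℕ) (κ : ℂ) (hκ : NotNegRat κ) :
    ∃ R₁ : ℝ, 0 < R₁ ∧ ∀ lam : Fin n → ℕ, IsPartition lam →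
      (∏ p ∈ univ.filter (fun p : Fin n × Fin n => p.1 < p.2),
        ‖(poch (κ * (((p.2 : ℕ) : ℂ) - ((p.1 : ℕ) : ℂ) - 1) + 1) (lam p.1 - lam p.2) /
            poch (κ * (((p.2 : ℕ) : ℂ) - ((p.1 : ℕ) : ℂ)) + 1) (lam p.1 - lam p.2))‖) ≤
      R₁ ^ wt lam := by

  classical
  set A := ‖κ‖ with hAdef
  have hA0 : 0 ≤ A := norm_nonneg κ
  have hne : ∀ d k : ℕ, 1 ≤ d → κ * d + 1 + k ≠ 0 := by
    intro d k hd h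
    have hdC : (d:ℂ) ≠ 0 := Nat.cast_ne_zero.2 (by omega)
    have hdQ : (d:ℚ) ≠ 0 := Nat.cast_ne_zero.2 (by omega)
    apply hκ (-((1+k:ℚ)/d))
    · have : (0:ℚ) < (1+k:ℚ)/d := by positivity
      linarith
    · push_cast
      field_simp
      linear_combination h
  set K := ⌈A * n⌉₊ with hK
  set S : Finset (ℕ × ℕ) := insert (1,0) ((Finset.Icc 1 n) ×ˢ (Finset.range (K+1))) with hS
  have hSne : S.Nonempty := insert_nonempty _ _
  set ε : ℝ := min 1 (S.inf' hSne fun p => ‖κ * p.1 + 1 + p.2‖) with hε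
  have hεpos : 0 < ε := by
    apply lt_min one_pos
    rw [Finset.lt_inf'_iff]
    intro p hp
    apply norm_pos_iff.2
    apply hne
    rcases Finset.mem_insert.1 hp with h | h
    · simp [h]
    · exact (Finset.mem_Icc.1 (Finset.mem_product.1 h).1).1
  have hε1 : ε ≤ 1 := min_le_left _ _
  have hlow : ∀ d k : ℕ, 1 ≤ d → d ≤ n → ε ≤ ‖κ * d + 1 + k‖ := by
    intro d k hd1 hdn
    by_cases hk : k ≤ K
    · refine le_trans (min_le_right _ _) ?_
      exact Finset.inf'_le _ (show (d, k) ∈ S from Finset.mem_insert_of_mem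
        (Finset.mem_product.2
          ⟨Finset.mem_Icc.2 ⟨hd1, hdn⟩, Finset.mem_range.2 (by omega)⟩))
    · refine le_trans hε1 ?_
      have h1 : ((1:ℝ) + k) ≤ ‖κ * d + 1 + k‖ + A * d := by
        have h2 : ‖(κ * d + 1 + k) + (-(κ * d))‖ ≤
            ‖κ * d + 1 + k‖ + ‖κ * d‖ := by
          refine le_trans (norm_add_le _ _) ?_
          rw [norm_neg]
        have h3 : (κ * d + 1 + k) + (-(κ * d)) = ((1 + k : ℝ) : ℂ) := by push_cast; ring
        rw [h3, Complex.norm_real, Real.norm_eq_abs, abs_of_nonneg (by positivity)] at h2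
        have h4 : ‖κ * d‖ = A * d := by
          rw [norm_mul, Complex.norm_natCast]
        rw [h4] at h2
        exact h2
      have h5 : A * (d:ℝ) ≤ A * n := by
        apply mul_le_mul_of_nonneg_left _ hA0
        exact_mod_cast hdn
      have h6 : A * (n:ℝ) ≤ (K:ℝ) := Nat.le_ceil _
      have h7 : (K:ℝ) + 1 ≤ (k:ℝ) := by exact_mod_cast (by omega : K + 1 ≤ k)
      linarith
  have hC1 : (1:ℝ) ≤ 1 + A / ε := by
    have : 0 ≤ A / ε := div_nonneg hA0 hεpos.le
    linarith
  have hfac : ∀ d k : ℕ, 1 ≤ d → d ≤ n →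
      ‖κ * ((d:ℂ) - 1) + 1 + k‖ / ‖κ * d + 1 + k‖ ≤ 1 + A / ε := by
    intro d k hd1 hdn
    have hden : 0 < ‖κ * d + 1 + k‖ := norm_pos_iff.2 (hne d k hd1)
    rw [div_le_iff₀ hden]
    have hnum : ‖κ * ((d:ℂ) - 1) + 1 + k‖ ≤ ‖κ * d + 1 + k‖ + A := by
      have h3 : κ * ((d:ℂ) - 1) + 1 + k = (κ * d + 1 + k) + (-κ) := by ring
      rw [h3]
      refine le_trans (norm_add_le _ _) ?_
      rw [norm_neg]
    have h8 : A ≤ A / ε * ‖κ * d + 1 + k‖ := by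
      have h9 := hlow d k hd1 hdn
      calc A = A / ε * ε := by field_simp
        _ ≤ A / ε * ‖κ * d + 1 + k‖ :=
            mul_le_mul_of_nonneg_left h9 (div_nonneg hA0 hεpos.le)
    calc ‖κ * ((d:ℂ) - 1) + 1 + k‖ ≤ ‖κ * d + 1 + k‖ + A := hnum
      _ ≤ ‖κ * d + 1 + k‖ + A / ε * ‖κ * d + 1 + k‖ := by linarith
      _ = (1 + A / ε) * ‖κ * d + 1 + k‖ := by ring
  refine ⟨(1 + A / ε) ^ n, pow_pos (lt_of_lt_of_le one_pos hC1) n, ?_⟩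
  intro lam _
  have hpair : ∀ p : Fin n × Fin n, p.1 < p.2 →
      ‖poch (κ * (((p.2 : ℕ) : ℂ) - ((p.1 : ℕ) : ℂ) - 1) + 1) (lam p.1 - lam p.2) /
            poch (κ * (((p.2 : ℕ) : ℂ) - ((p.1 : ℕ) : ℂ)) + 1) (lam p.1 - lam p.2)‖ ≤
        (1 + A / ε) ^ (lam p.1 - lam p.2) := by
    intro p hp
    set d : ℕ := (p.2 : ℕ) - (p.1 : ℕ) with hd
    have hd1 : 1 ≤ d := by omega
    have hdn : d ≤ n := by omega
    have hcast : ((p.2 : ℕ) : ℂ) - ((p.1 : ℕ) : ℂ) = (d:ℂ) := by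
      rw [hd, Nat.cast_sub (le_of_lt hp)]
    rw [hcast]
    set m := lam p.1 - lam p.2 with hm
    rw [norm_div]
    unfold poch
    rw [norm_prod, norm_prod, ← Finset.prod_div_distrib]
    calc ∏ k ∈ Finset.range m,
          ‖κ * ((d:ℂ) - 1) + 1 + k‖ / ‖κ * (d:ℂ) + 1 + k‖ ≤
        ∏ k ∈ Finset.range m, (1 + A / ε) := by
          refine Finset.prod_le_prod (fun k _ => by positivity) (fun k _ => ?_)
          exact hfac d k hd1 hdn
      _ = (1 + A / ε) ^ m := by rw [Finset.prod_const, Finset.card_range]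
  have hsum : ∑ p ∈ univ.filter (fun p : Fin n × Fin n => p.1 < p.2),
      (lam p.1 - lam p.2) ≤ n * wt lam := by
    calc ∑ p ∈ univ.filter (fun p : Fin n × Fin n => p.1 < p.2), (lam p.1 - lam p.2) ≤
        ∑ p ∈ univ.filter (fun p : Fin n × Fin n => p.1 < p.2), lam p.1 :=
          Finset.sum_le_sum (fun p _ => Nat.sub_le _ _)
      _ ≤ ∑ p : Fin n × Fin n, lam p.1 :=
          Finset.sum_le_sum_of_subset (Finset.filter_subset _ _)
      _ = n * wt lam := by
          rw [Fintype.sum_prod_type]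
          simp [wt, Finset.mul_sum, mul_comm]
  calc (∏ p ∈ univ.filter (fun p : Fin n × Fin n => p.1 < p.2),
        ‖poch (κ * (((p.2 : ℕ) : ℂ) - ((p.1 : ℕ) : ℂ) - 1) + 1) (lam p.1 - lam p.2) /
            poch (κ * (((p.2 : ℕ) : ℂ) - ((p.1 : ℕ) : ℂ)) + 1) (lam p.1 - lam p.2)‖) ≤
      ∏ p ∈ univ.filter (fun p : Fin n × Fin n => p.1 < p.2), (1 + A / ε) ^ (lam p.1 - lam p.2) := by
        refine Finset.prod_le_prod (fun p _ => norm_nonneg _) (fun p hp => ?_)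
        exact hpair p (Finset.mem_filter.1 hp).2
    _ = (1 + A / ε) ^ (∑ p ∈ univ.filter (fun p : Fin n × Fin n => p.1 < p.2), (lam p.1 - lam p.2)) :=
        Finset.prod_pow_eq_pow_sum _ _ _
    _ ≤ (1 + A / ε) ^ (n * wt lam) := pow_le_pow_right₀ hC1 hsum
    _ = ((1 + A / ε) ^ n) ^ wt lam := by rw [pow_mul]
end

section
/- Let κ ∈ ℂ not be a negative rational number. Then there exists a constant R₂ > 0 such that for every partition λ = (λ_1,…,λ_n) with at most n parts, |κ|^{|λ|} · J_λ(1^n;|κ|) / |h^λ(κ)| ≤ R₂^{|λ|}, where h^λ(κ) = ∏_{i=1}^{ℓ(λ)} ∏_{j=1}^{λ_i} (λ_i − j + κ(λ′_j − i + 1)) and 1^n = (1,…,1). -/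
open MeasureTheory Finset Real

noncomputable section

/-- The conjugate partition: `λ′_j = #{i : λ_i ≥ j}`. -/
def conjPart {n : ℕ} (lam : Fin n → ℕ) (j : ℕ) : ℕ :=
  (univ.filter (fun i : Fin n => j ≤ lam i)).card

/-- `h^λ(κ) = ∏_{i} ∏_{j=1}^{λ_i} (λ_i - j + κ(λ′_j - i + 1))` (with `i`, `j` 1-based). -/
def hpoly {n : ℕ} (κ : ℂ) (lam : Fin n → ℕ) : ℂ :=
  ∏ i : Fin n, ∏ j ∈ Finset.range (lam i),
    ((lam i : ℂ) - ((j : ℂ) + 1) + κ * ((conjPart lam (j + 1) : ℂ) - ((i : ℕ) : ℂ)))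

/-- `J_λ(1ⁿ;t) = t^{-|λ|} ∏_i ∏_{j=1}^{λ_i} (j - 1 + t(n - i + 1))` (with `i`, `j` 1-based),
for a real parameter `t`. -/
def JoneVal (n : ℕ) (t : ℝ) (lam : Fin n → ℕ) : ℝ :=
  t ^ (-(wt lam : ℤ)) *
    ∏ i : Fin n, ∏ j ∈ Finset.range (lam i), ((j : ℝ) + t * ((n : ℝ) - ((i : ℕ) : ℝ)))

end

set_option maxHeartbeats 1000000 in
/-- The bound `|κ|^{|λ|} J_λ(1ⁿ;|κ|)/|h^λ(κ)| ≤ R₂^{|λ|}`. -/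
theorem Jack_one_over_h_bound (n : ℕ) (κ : ℂ) (hκ : NotNegRat κ) :
    ∃ R₂ : ℝ, 0 < R₂ ∧ ∀ lam : Fin n → ℕ, IsPartition lam →
      ‖κ‖ ^ wt lam * JoneVal n ‖κ‖ lam /
          ‖hpoly κ lam‖ ≤
        R₂ ^ wt lam := by
  classical
  rcases Nat.eq_zero_or_pos n with rfl | hn
  · refine ⟨1, one_pos, fun lam _ => ?_⟩
    have hw : wt lam = 0 := by simp [wt]
    simp [hw, JoneVal, hpoly]
  by_cases hκ0 : κ = 0
  · refine ⟨1, one_pos, fun lam hlam => ?_⟩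
    subst hκ0
    rcases Nat.eq_zero_or_pos (wt lam) with h0 | h0
    · have hz : ∀ i : Fin n, lam i = 0 := by
        have h0' : ∑ i, lam i = 0 := h0
        intro i
        exact Finset.sum_eq_zero_iff.mp h0' i (Finset.mem_univ i)
      simp [JoneVal, hpoly, h0, hz]
    · have hz : ‖(0:ℂ)‖ ^ wt lam = 0 := by
        simp [zero_pow h0.ne']
      rw [hz]
      simp
  -- main case
  set t := ‖κ‖ with ht_def
  have ht : 0 < t := norm_pos_iff.mpr hκ0
  have hnz : ∀ a b : ℕ, 1 ≤ b → ((a:ℂ) + κ * b) ≠ 0 := by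
    intro a b hb h
    have hb0 : (b:ℂ) ≠ 0 := Nat.cast_ne_zero.mpr (by omega)
    have hκeq : κ = -((a:ℂ) / (b:ℂ)) := by
      field_simp
      linear_combination h
    rcases Nat.eq_zero_or_pos a with rfl | ha
    · simp at hκeq; exact hκ0 hκeq
    · refine hκ (-((a:ℚ)/(b:ℚ))) ?_ ?_
      · have hap : (0:ℚ) < (a:ℚ) := by exact_mod_cast ha
        have hbp : (0:ℚ) < (b:ℚ) := by exact_mod_cast (by omega : 0 < b)
        have := div_pos hap hbp
        linarith
      · push_cast
        exact hκeq
  obtain ⟨M, hM_def⟩ : ∃ M : ℕ, M = ⌈2 * t * n⌉₊ + 1 := ⟨_, rfl⟩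
  have hMpos : 0 < M := by omega
  have hS : ((Finset.range M) ×ˢ (Finset.Icc 1 n)).Nonempty :=
    ⟨(0,1), by simp only [Finset.mem_product, Finset.mem_range, Finset.mem_Icc]; omega⟩
  obtain ⟨c₀, hc₀def⟩ : ∃ c₀, c₀ = ((Finset.range M) ×ˢ (Finset.Icc 1 n)).inf' hS
    (fun p => ‖(p.1:ℂ) + κ * p.2‖) := ⟨_, rfl⟩
  have hc₀ : 0 < c₀ := by
    rw [hc₀def, Finset.lt_inf'_iff]
    rintro ⟨a,b⟩ hp
    simp only [Finset.mem_product, Finset.mem_Icc, Finset.mem_range] at hp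
    exact norm_pos_iff.mpr (hnz a b hp.2.1)
  have hMR : (0:ℝ) < M := by exact_mod_cast hMpos
  obtain ⟨c, hcdef⟩ : ∃ c : ℝ, c = min (c₀ / M) (4⁻¹) := ⟨_, rfl⟩
  have hc : 0 < c := hcdef ▸ lt_min (div_pos hc₀ hMR) (by norm_num)
  have hA : ∀ a b : ℕ, 1 ≤ b → b ≤ n →
      c * ((a:ℝ)+1) ≤ ‖(a:ℂ) + κ * b‖ := by
    intro a b hb1 hbn
    rcases lt_or_ge a M with haM | haM
    · have s1 : c * ((a:ℝ)+1) ≤ (c₀ / M) * M := by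
        rw [hcdef]
        apply mul_le_mul (min_le_left _ _) ?_ (by positivity) (le_of_lt (div_pos hc₀ hMR))
        exact_mod_cast haM
      have s2 : (c₀ / (M:ℝ)) * M = c₀ := div_mul_cancel₀ _ (ne_of_gt hMR)
      have hmem : ((a,b) : ℕ × ℕ) ∈ (Finset.range M) ×ˢ (Finset.Icc 1 n) := by
        simp only [Finset.mem_product, Finset.mem_Icc, Finset.mem_range]
        exact ⟨haM, hb1, hbn⟩
      have s3 : c₀ ≤ ‖(a:ℂ) + κ * b‖ := by
        rw [hc₀def]
        exact Finset.inf'_le (f := fun p : ℕ × ℕ => ‖(p.1:ℂ) + κ * p.2‖) hmem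
      linarith
    · have haR : (2 * t * n) + 1 ≤ (a:ℝ) := by
        have h1 : (2*t*(n:ℝ)) ≤ (⌈2*t*(n:ℝ)⌉₊ : ℝ) := Nat.le_ceil _
        have h2 : (M:ℝ) ≤ a := by exact_mod_cast haM
        rw [hM_def] at h2
        push_cast at h2
        linarith
      have habs : (a:ℝ) - t * n ≤ ‖(a:ℂ) + κ * b‖ := by
        have h1 := norm_add_le ((a:ℂ) + κ * b) (-(κ * b))
        simp only [add_neg_cancel_right, norm_neg] at h1
        rw [Complex.norm_natCast] at h1
        rw [norm_mul, Complex.norm_natCast] at h1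
        have hbn' : (b:ℝ) ≤ n := by exact_mod_cast hbn
        have hmul : t * b ≤ t * n := by nlinarith [ht.le]
        linarith
      have hq1 : c * ((a:ℝ)+1) ≤ ((a:ℝ)+1)/4 := by
        have h4 : c ≤ 4⁻¹ := hcdef ▸ min_le_right _ _
        have ha0 : (0:ℝ) ≤ (a:ℝ)+1 := by positivity
        nlinarith
      have hq2 : ((a:ℝ)+1)/4 ≤ (a:ℝ) - t*n := by
        have htn : (0:ℝ) ≤ t * n := by positivity
        nlinarith
      linarith
  -- per-cell structure
  refine ⟨(1 + t * n)/c, by positivity, fun lam hlam => ?_⟩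
  have hconj : ∀ (i : Fin n) (j : ℕ), j < lam i → (i : ℕ) + 1 ≤ conjPart lam (j+1) := by
    intro i j hj
    have hsub : Finset.Iic i ⊆ univ.filter (fun i' : Fin n => j + 1 ≤ lam i') := by
      intro i' hi'
      simp only [Finset.mem_Iic] at hi'
      simp only [Finset.mem_filter, Finset.mem_univ, true_and]
      exact le_trans hj (hlam i' i hi')
    have hcard := Finset.card_le_card hsub
    rwa [Fin.card_Iic] at hcard
  have hfac : ∀ (i : Fin n) (j : ℕ), j < lam i →
      ∃ a b : ℕ, 1 ≤ b ∧ b ≤ n ∧ lam i - 1 - j = a ∧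
        ((lam i : ℂ) - ((j:ℂ)+1) + κ * ((conjPart lam (j+1) : ℂ) - ((i:ℕ):ℂ)))
          = (a:ℂ) + κ * (b:ℂ) := by
    intro i j hj
    refine ⟨lam i - (j+1), conjPart lam (j+1) - (i:ℕ), ?_, ?_, by omega, ?_⟩
    · have := hconj i j hj; omega
    · have hle : conjPart lam (j+1) ≤ n :=
        le_trans (Finset.card_filter_le _ _) (by simp)
      omega
    · have h1 : j + 1 ≤ lam i := hj
      have h2 : (i:ℕ) ≤ conjPart lam (j+1) := by have := hconj i j hj; omega
      push_cast [Nat.cast_sub h1, Nat.cast_sub h2]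
      ring
  have hH : ‖hpoly κ lam‖ = ∏ i, ∏ j ∈ Finset.range (lam i),
      ‖(lam i : ℂ) - ((j:ℂ)+1) + κ * ((conjPart lam (j+1) : ℂ) - ((i:ℕ):ℂ))‖ := by
    rw [hpoly, Complex.norm_prod]
    exact Finset.prod_congr rfl fun i _ => Complex.norm_prod _ _
  have hHpos : 0 < ‖hpoly κ lam‖ := by
    rw [hH]
    refine Finset.prod_pos fun i _ => Finset.prod_pos fun j hj => ?_
    rw [Finset.mem_range] at hj
    obtain ⟨a, b, hb1, hbn, -, heq⟩ := hfac i j hj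
    rw [heq]
    exact norm_pos_iff.mpr (hnz a b hb1)
  have hnum_nonneg : ∀ (i : Fin n) (j : ℕ),
      (0:ℝ) ≤ (j:ℝ) + t * ((n:ℝ) - ((i:ℕ):ℝ)) := by
    intro i j
    have hin : ((i:ℕ):ℝ) ≤ n := le_of_lt (by exact_mod_cast i.isLt)
    have := mul_nonneg ht.le (by linarith : (0:ℝ) ≤ (n:ℝ) - ((i:ℕ):ℝ))
    positivity
  have hcell : ∀ (i : Fin n), ∀ j ∈ Finset.range (lam i),
      (((lam i - 1 - j : ℕ):ℝ) + t * ((n:ℝ) - ((i:ℕ):ℝ))) ≤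
        ((1 + t*n)/c) * ‖(lam i : ℂ) - ((j:ℂ)+1)
          + κ * ((conjPart lam (j+1) : ℂ) - ((i:ℕ):ℂ))‖ := by
    intro i j hj
    rw [Finset.mem_range] at hj
    obtain ⟨a, b, hb1, hbn, hav, heq⟩ := hfac i j hj
    rw [heq, hav]
    have hAb := hA a b hb1 hbn
    have hin : ((i:ℕ):ℝ) ≤ n := le_of_lt (by exact_mod_cast i.isLt)
    have hi0 : (0:ℝ) ≤ ((i:ℕ):ℝ) := Nat.cast_nonneg _
    have h1 : ((a:ℝ) + t * ((n:ℝ) - ((i:ℕ):ℝ))) ≤ (1 + t*n) * ((a:ℝ)+1) := by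
      have ha0 : (0:ℝ) ≤ (a:ℝ) := Nat.cast_nonneg _
      nlinarith [ht.le, mul_nonneg ht.le hi0,
        mul_nonneg (mul_nonneg ht.le (Nat.cast_nonneg n)) ha0]
    calc ((a:ℝ) + t * ((n:ℝ) - ((i:ℕ):ℝ))) ≤ (1 + t*n) * ((a:ℝ)+1) := h1
      _ = ((1+t*n)/c) * (c * ((a:ℝ)+1)) := by field_simp
      _ ≤ ((1+t*n)/c) * ‖(a:ℂ) + κ * (b:ℂ)‖ := by
          apply mul_le_mul_of_nonneg_left hAb
          positivity
  -- main computation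
  rw [JoneVal, zpow_neg, zpow_natCast, ← mul_assoc,
    mul_inv_cancel₀ (pow_ne_zero _ ht.ne'), one_mul, div_le_iff₀ hHpos]
  have hN : (∏ i, ∏ j ∈ Finset.range (lam i), ((j:ℝ) + t * ((n:ℝ) - ((i:ℕ):ℝ)))) =
      ∏ i, ∏ j ∈ Finset.range (lam i),
        (((lam i - 1 - j : ℕ):ℝ) + t * ((n:ℝ) - ((i:ℕ):ℝ))) := by
    refine Finset.prod_congr rfl fun i _ => ?_
    exact (Finset.prod_range_reflect
      (fun j => ((j:ℝ) + t * ((n:ℝ) - ((i:ℕ):ℝ)))) (lam i)).symm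
  rw [hN]
  calc (∏ i, ∏ j ∈ Finset.range (lam i),
        (((lam i - 1 - j : ℕ):ℝ) + t * ((n:ℝ) - ((i:ℕ):ℝ))))
      ≤ ∏ i, ∏ j ∈ Finset.range (lam i),
        (((1 + t*n)/c) * ‖(lam i : ℂ) - ((j:ℂ)+1)
          + κ * ((conjPart lam (j+1) : ℂ) - ((i:ℕ):ℂ))‖) := by
        refine Finset.prod_le_prod (fun i _ => Finset.prod_nonneg fun j _ => hnum_nonneg i _)
          (fun i _ => Finset.prod_le_prod (fun j _ => hnum_nonneg i _) (hcell i))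
    _ = ((1 + t*n)/c) ^ wt lam * ‖hpoly κ lam‖ := by
        simp only [Finset.prod_mul_distrib, Finset.prod_const, Finset.card_range]
        rw [Finset.prod_pow_eq_pow_sum, ← hH]
        rfl
end
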